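/- (Wood's theorem, planar case, converse implication) Let φ₁,…,φ_N be holomorphic functions on a disc D ⊆ ℂ with pairwise distinct values at each point (or more generally distinct as germs), and suppose that for every l ≥ 1 the power sum Σ_j φ_j(x)^l is a polynomial in x of degree at most l. Then there exists a polynomial f ∈ ℂ[x,y] of total degree N, monic of degree N in y, such that f(x, φ_j(x)) ≡ 0 for all j. -/

import Mathlib

open Polynomial

/-- Wood's theorem, planar case, converse implication.  If `φ 1, …, φ N` are holomorphic
on a disc, with pairwise distinct values at each point, and all power sums
`x ↦ ∑ j, φ j x ^ l` agree with polynomials of degree `≤ l`, then there is a polynomial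
`f ∈ ℂ[x][y]`, monic of degree `N` in `y` and of total degree `N`, vanishing on all the
graphs `y = φ j x`. -/
theorem wood_planar_converse
    (N : ℕ)
    (z₀ : ℂ) (r : ℝ) (hr : 0 < r)
    (φ : Fin N → ℂ → ℂ)
    (hφ : ∀ j, DifferentiableOn ℂ (φ j) (Metric.ball z₀ r))
    (hdist : ∀ x ∈ Metric.ball z₀ r, ∀ j k : Fin N, j ≠ k → φ j x ≠ φ k x)
    (hps : ∀ l : ℕ, 1 ≤ l → ∃ P : Polynomial ℂ, P.degree ≤ (l : ℕ) ∧
      ∀ x ∈ Metric.ball z₀ r, (∑ j : Fin N, φ j x ^ l) = P.eval x) :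
    ∃ f : Polynomial (Polynomial ℂ), f.Monic ∧ f.natDegree = N ∧
      (∀ k : ℕ, (f.coeff k).natDegree ≤ N - k) ∧
      ∀ j : Fin N, ∀ x ∈ Metric.ball z₀ r,
        (f.map (Polynomial.evalRingHom x)).eval (φ j x) = 0 := by
  classical
  -- totalize the power-sum polynomials
  have hps' : ∀ l : ℕ, ∃ P : Polynomial ℂ, P.degree ≤ (l : ℕ) ∧
      (1 ≤ l → ∀ x ∈ Metric.ball z₀ r, (∑ j : Fin N, φ j x ^ l) = P.eval x) := by
    intro l
    by_cases hl : 1 ≤ l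
    · obtain ⟨P, h1, h2⟩ := hps l hl
      exact ⟨P, h1, fun _ => h2⟩
    · exact ⟨0, by simp, fun h => absurd h hl⟩
  choose P hPdeg hPval using hps'
  -- the elementary symmetric functions of the φ's
  set E : ℕ → ℂ → ℂ := fun k x =>
    (Multiset.map (fun j => φ j x) (Finset.univ : Finset (Fin N)).val).esymm k with hEdef
  -- Newton's identity, pointwise
  have newton : ∀ k : ℕ, ∀ x : ℂ,
      (k : ℂ) * E k x = (-1) ^ (k + 1) *
        ∑ a ∈ Finset.HasAntidiagonal.antidiagonal k with a.1 < k,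
          (-1) ^ a.1 * E a.1 x * (∑ j : Fin N, φ j x ^ a.2) := by
    intro k x
    have h := congrArg (MvPolynomial.aeval (fun j : Fin N => φ j x))
      (MvPolynomial.mul_esymm_eq_sum (Fin N) ℂ k)
    simpa [MvPolynomial.aeval_esymm_eq_multiset_esymm, MvPolynomial.psum, map_sum,
      map_mul, map_pow, map_natCast, hEdef] using h
  -- each elementary symmetric function agrees with a polynomial of degree ≤ k on the ball
  have key : ∀ k : ℕ, ∃ Q : Polynomial ℂ, Q.degree ≤ (k : ℕ) ∧
      ∀ x ∈ Metric.ball z₀ r, E k x = Q.eval x := by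
    intro k
    induction k using Nat.strong_induction_on with
    | _ k ih =>
      rcases Nat.eq_zero_or_pos k with hk | hk
      · subst hk
        refine ⟨1, by simp, fun x hx => ?_⟩
        simp [hEdef, Multiset.esymm]
      · choose Q hQdeg hQval using fun m (hm : m < k) => ih m hm
        set Q' : ℕ → Polynomial ℂ := fun m => if h : m < k then Q m h else 0 with hQ'
        refine ⟨Polynomial.C ((k : ℂ)⁻¹ * (-1) ^ (k + 1)) *
          ∑ a ∈ Finset.HasAntidiagonal.antidiagonal k with a.1 < k,
            Polynomial.C ((-1 : ℂ) ^ a.1) * (Q' a.1 * P a.2), ?_, ?_⟩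
        · refine le_trans (degree_mul_le _ _) ?_
          have h1 : (Polynomial.C ((k : ℂ)⁻¹ * (-1) ^ (k + 1))).degree ≤ 0 := degree_C_le
          have h2 : (∑ a ∈ Finset.HasAntidiagonal.antidiagonal k with a.1 < k,
              Polynomial.C ((-1 : ℂ) ^ a.1) * (Q' a.1 * P a.2)).degree ≤ (k : ℕ) := by
            refine le_trans (degree_sum_le _ _) ?_
            refine Finset.sup_le fun a ha => ?_
            rw [Finset.mem_filter, Finset.HasAntidiagonal.mem_antidiagonal] at ha
            refine le_trans (degree_mul_le _ _) ?_
            have hq : (Q' a.1).degree ≤ (a.1 : ℕ) := by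
              rw [hQ']; simp only [dif_pos ha.2]; exact hQdeg a.1 ha.2
            have hp : (P a.2).degree ≤ (a.2 : ℕ) := hPdeg a.2
            calc (Polynomial.C ((-1 : ℂ) ^ a.1)).degree + (Q' a.1 * P a.2).degree
                ≤ 0 + ((a.1 : WithBot ℕ) + (a.2 : WithBot ℕ)) := by
                  refine add_le_add degree_C_le (le_trans (degree_mul_le _ _) (add_le_add hq hp))
              _ = ((a.1 + a.2 : ℕ) : WithBot ℕ) := by
                  rw [zero_add, Nat.cast_add]
              _ = (k : WithBot ℕ) := by rw [ha.1]
          calc _ ≤ 0 + ((k : ℕ) : WithBot ℕ) := add_le_add h1 h2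
            _ = ((k : ℕ) : WithBot ℕ) := zero_add _
        · intro x hx
          have hk0 : (k : ℂ) ≠ 0 := Nat.cast_ne_zero.mpr hk.ne'
          rw [eval_mul, eval_C, eval_finset_sum]
          have hterm : ∀ a ∈ Finset.HasAntidiagonal.antidiagonal k |>.filter (fun a => a.1 < k),
              eval x (Polynomial.C ((-1 : ℂ) ^ a.1) * (Q' a.1 * P a.2)) =
              (-1 : ℂ) ^ a.1 * E a.1 x * (∑ j : Fin N, φ j x ^ a.2) := by
            intro a ha
            rw [Finset.mem_filter, Finset.HasAntidiagonal.mem_antidiagonal] at ha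
            have h1 : a.1 < k := ha.2
            have h2 : 1 ≤ a.2 := by omega
            rw [eval_mul, eval_C, eval_mul]
            rw [hQ']
            simp only [dif_pos h1]
            rw [← hQval a.1 h1 x hx, ← hPval a.2 h2 x hx]
            ring
          rw [Finset.sum_congr rfl hterm, mul_assoc, ← newton k x,
            inv_mul_cancel_left₀ hk0]
  choose Q hQdeg hQval using key
  have hQ0 : Q 0 = 1 := by
    have h1 : (Q 0).degree ≤ 0 := by simpa using hQdeg 0
    have h2 : E 0 z₀ = (Q 0).eval z₀ := hQval 0 z₀ (Metric.mem_ball_self hr)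
    have hE0 : E 0 z₀ = 1 := by simp [hEdef, Multiset.esymm]
    rw [eq_C_of_degree_le_zero h1, eval_C] at h2
    rw [eq_C_of_degree_le_zero h1, ← h2, hE0, map_one]
  set f : Polynomial (Polynomial ℂ) :=
    ∑ k ∈ Finset.range (N + 1),
      Polynomial.C (Polynomial.C ((-1 : ℂ) ^ (N - k)) * Q (N - k)) * Polynomial.X ^ k with hf
  have hcoeff : ∀ m, f.coeff m =
      if m ∈ Finset.range (N + 1) then Polynomial.C ((-1 : ℂ) ^ (N - m)) * Q (N - m) else 0 := by
    intro m
    rw [hf, finset_sum_coeff]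
    simp_rw [coeff_C_mul_X_pow]
    exact Finset.sum_ite_eq (Finset.range (N + 1)) m
      (fun k => Polynomial.C ((-1 : ℂ) ^ (N - k)) * Q (N - k))
  have hcoeffN : f.coeff N = 1 := by
    rw [hcoeff]
    simp [hQ0]
  have hdegle : f.degree ≤ (N : ℕ) := by
    rw [hf]
    refine le_trans (degree_sum_le _ _) ?_
    refine Finset.sup_le fun k hk => ?_
    refine le_trans (degree_C_mul_X_pow_le _ _) ?_
    exact_mod_cast Nat.cast_le.mpr (Nat.lt_succ_iff.mp (Finset.mem_range.mp hk))
  have hdegf : f.degree = (N : ℕ) :=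
    le_antisymm hdegle (le_degree_of_ne_zero (by rw [hcoeffN]; exact one_ne_zero))
  have hnat : f.natDegree = N := natDegree_eq_of_degree_eq_some hdegf
  refine ⟨f, ?_, hnat, ?_, ?_⟩
  · unfold Polynomial.Monic Polynomial.leadingCoeff
    rw [hnat, hcoeffN]
  · intro k
    rw [hcoeff k]
    by_cases hk : k ∈ Finset.range (N + 1)
    · rw [if_pos hk]
      refine le_trans (natDegree_mul_le) ?_
      have h1 : (Polynomial.C ((-1 : ℂ) ^ (N - k))).natDegree = 0 := natDegree_C _
      have h2 : (Q (N - k)).natDegree ≤ N - k :=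
        natDegree_le_iff_degree_le.mpr (hQdeg (N - k))
      omega
    · rw [if_neg hk]
      simp
  · intro j x hx
    set y := φ j x with hy
    set s : Multiset ℂ := Multiset.map (fun m => φ m x) (Finset.univ : Finset (Fin N)).val
      with hs
    have hcard : Multiset.card s = N := by
      rw [hs, Multiset.card_map]
      simp
    -- the evaluated polynomial
    have hmap : (f.map (Polynomial.evalRingHom x)) =
        ∑ k ∈ Finset.range (N + 1),
          Polynomial.C ((-1 : ℂ) ^ (N - k) * (Q (N - k)).eval x) * Polynomial.X ^ k := by
      rw [hf, Polynomial.map_sum]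
      refine Finset.sum_congr rfl fun k hk => ?_
      rw [Polynomial.map_mul, Polynomial.map_pow, Polynomial.map_X, Polynomial.map_C]
      simp [eval_mul]
    have heval : (f.map (Polynomial.evalRingHom x)).eval y =
        ∑ k ∈ Finset.range (N + 1), (-1 : ℂ) ^ (N - k) * E (N - k) x * y ^ k := by
      rw [hmap, eval_finset_sum]
      refine Finset.sum_congr rfl fun k hk => ?_
      rw [eval_mul, eval_C, eval_pow, eval_X, ← hQval (N - k) x hx]
    -- Vieta's formula
    have hvieta := Multiset.prod_X_sub_X_eq_sum_esymm s
    have hzero : eval y ((s.map fun t => Polynomial.X - Polynomial.C t).prod) = 0 := by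
      rw [eval_multiset_prod]
      refine Multiset.prod_eq_zero ?_
      have hmem : Polynomial.X - Polynomial.C y ∈ s.map fun t => Polynomial.X - Polynomial.C t := by
        refine Multiset.mem_map.mpr ⟨y, ?_, rfl⟩
        rw [hs]
        exact Multiset.mem_map.mpr ⟨j, Finset.mem_univ_val j, rfl⟩
      have : (0 : ℂ) = eval y (Polynomial.X - Polynomial.C y) := by simp
      rw [this]
      exact Multiset.mem_map_of_mem _ hmem
    have hsum : ∑ k ∈ Finset.range (N + 1), (-1 : ℂ) ^ (N - k) * E (N - k) x * y ^ k =
        ∑ k ∈ Finset.range (N + 1), (-1 : ℂ) ^ k * E k x * y ^ (N - k) := by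
      rw [← Finset.sum_range_reflect (fun k => (-1 : ℂ) ^ k * E k x * y ^ (N - k)) (N + 1)]
      refine Finset.sum_congr rfl fun k hk => ?_
      have hkN : k ≤ N := Nat.lt_succ_iff.mp (Finset.mem_range.mp hk)
      have e1 : N + 1 - 1 - k = N - k := by omega
      have e2 : N - (N - k) = k := Nat.sub_sub_self hkN
      rw [e1, e2]
    have hrhs : eval y ((s.map fun t => Polynomial.X - Polynomial.C t).prod) =
        ∑ k ∈ Finset.range (N + 1), (-1 : ℂ) ^ k * E k x * y ^ (N - k) := by
      rw [hvieta, hcard, eval_finset_sum]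
      refine Finset.sum_congr rfl fun k hk => ?_
      rw [eval_mul, eval_mul, eval_pow, eval_C, eval_pow, eval_X]
      simp [hEdef, hs]
      ring
    rw [heval, hsum, ← hrhs, hzero]
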